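/- Let G be a finite connected graph with graph distance d, let L ≥ ℓ ≥ 0 be integers and q ∈ (0,1). Suppose f : G → ℝ≥0 is (ℓ,q)-subharmonic in the ball B_L(x), meaning that for every ball B_ℓ(y) ⊆ B_L(x) one has f(y) ≤ q · max_{z ∈ B_{ℓ+1}(y)} f(z). Then f(x) ≤ q^⌊(L+1)/(ℓ+1)⌋ · max_{z ∈ G} f(z). -/
import Mathlib


/-- subharmonicity bound on a finite connected graph. -/
theorem stmt_0 {V : Type*} [Fintype V] (G : SimpleGraph V) (hG : G.Connected)
    (L ℓ : ℕ) (hLℓ : ℓ ≤ L) (q : ℝ) (hq0 : 0 < q) (hq1 : q < 1)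
    (f : V → ℝ) (hf : ∀ v, 0 ≤ f v) (x : V)
    (hsub : ∀ y : V, ({z : V | G.dist y z ≤ ℓ} ⊆ {z : V | G.dist x z ≤ L}) →
      f y ≤ q * ⨆ z : {z : V // G.dist y z ≤ ℓ + 1}, f z.1) :
    f x ≤ q ^ ((L + 1) / (ℓ + 1)) * ⨆ z : V, f z := by
  set S := ⨆ z : V, f z with hS
  have key : ∀ n : ℕ, ∀ y : V, G.dist x y + n * (ℓ + 1) ≤ L + 1 → f y ≤ q ^ n * S := by
    intro n
    induction n with
    | zero =>
      intro y _
      simpa using le_ciSup (Finite.bddAbove_range f) y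
    | succ n ih =>
      intro y hy
      have hmul : (n + 1) * (ℓ + 1) = n * (ℓ + 1) + (ℓ + 1) := by ring
      have hball : {z : V | G.dist y z ≤ ℓ} ⊆ {z : V | G.dist x z ≤ L} := by
        intro z hz
        have := hG.dist_triangle (u := x) (v := y) (w := z)
        simp only [Set.mem_setOf_eq] at hz ⊢
        omega
      have h1 := hsub y hball
      have h2 : (⨆ z : {z : V // G.dist y z ≤ ℓ + 1}, f z.1) ≤ q ^ n * S := by
        have hne : Nonempty {z : V // G.dist y z ≤ ℓ + 1} := ⟨⟨y, by simp [SimpleGraph.dist_self]⟩⟩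
        refine ciSup_le fun z => ih z.1 ?_
        have := hG.dist_triangle (u := x) (v := y) (w := z.1)
        have hz := z.2
        omega
      calc f y ≤ q * (⨆ z : {z : V // G.dist y z ≤ ℓ + 1}, f z.1) := h1
        _ ≤ q * (q ^ n * S) := by
            exact mul_le_mul_of_nonneg_left h2 hq0.le
        _ = q ^ (n + 1) * S := by ring
  refine key ((L + 1) / (ℓ + 1)) x ?_
  have h := Nat.div_mul_le_self (L + 1) (ℓ + 1)
  simp [SimpleGraph.dist_self]
  omega
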